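/- arXiv:1609.07199 — 2 statements merged into one kernel-verified Lean document; each statement's English description precedes it below -/
import Mathlib

section
/- Let θ be a CPWL function and let x̄, v̄, Ψ, Λ(x̄) be as in the variational-system setting with v̄ ∈ Λ(x̄). Then v̄ is a critical multiplier if and only if there exists a pair (ξ,η) ∈ ℝ^n × ℝ^m with ξ ≠ 0 such that η ∈ (D̂*∂θ)(z̄,v̄)(−∇Φ(x̄)ξ), ∇ₓΨ(x̄,v̄)ξ + ∇Φ(x̄)*η = 0, and ⟨η, ∇Φ(x̄)ξ⟩ = 0. -/
open Filter Topology Set RealInnerProductSpace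

noncomputable section

abbrev Ev (k : ℕ) := EuclideanSpace ℝ (Fin k)

/-- The Bouligand–Severi tangent cone to a set `s` at `x`. -/
def tcone {E : Type*} [NormedAddCommGroup E] [NormedSpace ℝ E] (s : Set E) (x : E) : Set E :=
  {w | ∃ (z : ℕ → E) (c : ℕ → ℝ), (∀ k, z k ∈ s) ∧ (∀ k, 0 ≤ c k) ∧
      Tendsto z atTop (𝓝 x) ∧ Tendsto (fun k => c k • (z k - x)) atTop (𝓝 w)}

/-- The data of a convex piecewise linear (CPWL) extended-real-valued function on `ℝ^m`:
`θ(z) = max_i (⟨a i, z⟩ - al i)` on the polyhedron `dom θ = {z | ⟨d i, z⟩ ≤ be i ∀ i}`,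
and `θ(z) = +∞` outside of it. -/
structure CPWL (m : ℕ) where
  l : ℕ
  p : ℕ
  hl : 0 < l
  a : Fin l → Ev m
  al : Fin l → ℝ
  d : Fin p → Ev m
  be : Fin p → ℝ
  dom_nonempty : ∃ z : Ev m, ∀ i, ⟪d i, z⟫ ≤ be i

namespace CPWL

variable {m : ℕ} (θ : CPWL m)

/-- The (polyhedral) domain of the CPWL function. -/
def dom : Set (Ev m) := {z | ∀ i, ⟪θ.d i, z⟫ ≤ θ.be i}

/-- The real value `max_i (⟨a i, z⟩ - al i)` of the CPWL function (meaningful on its domain). -/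
def val (z : Ev m) : ℝ := ⨆ i : Fin θ.l, (⟪θ.a i, z⟫ - θ.al i)

/-- The CPWL function as an extended-real-valued function. -/
def eval (z : Ev m) : EReal :=
  @ite _ (z ∈ θ.dom) (Classical.propDecidable _) ((θ.val z : ℝ) : EReal) ⊤

/-- The subdifferential (of convex analysis) of the CPWL function. -/
def subdiff (z : Ev m) : Set (Ev m) :=
  {v | z ∈ θ.dom ∧ ∀ z' ∈ θ.dom, ⟪v, z' - z⟫ ≤ θ.val z' - θ.val z}

/-- Active indices `K(z)` of the max-representation. -/
def Kact (z : Ev m) : Set (Fin θ.l) := {i | θ.val z = ⟪θ.a i, z⟫ - θ.al i}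

/-- Active indices `I(z)` of the domain constraints. -/
def Iact (z : Ev m) : Set (Fin θ.p) := {i | ⟪θ.d i, z⟫ = θ.be i}

/-- The critical cone `𝒦(z̄,v̄) = {w ∈ T(z̄; dom θ) : ⟨v̄,w⟩ = θ′(z̄;w)}`. -/
def crit (zb vb : Ev m) : Set (Ev m) :=
  {w | w ∈ tcone θ.dom zb ∧
    Tendsto (fun t : ℝ => (θ.val (zb + t • w) - θ.val zb) / t) (𝓝[>] (0 : ℝ))
      (𝓝 ⟪vb, w⟫)}

/-- The graph of the subdifferential mapping. -/
def gph : Set (Ev m × Ev m) := {zv | zv.2 ∈ θ.subdiff zv.1}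

/-- The graphical derivative `(D∂θ)(z̄,v̄)(u)`. -/
def Dsub (zb vb u : Ev m) : Set (Ev m) := {w | (u, w) ∈ tcone θ.gph (zb, vb)}

/-- The regular coderivative `(D̂*∂θ)(z̄,v̄)(u)`. -/
def Dhat (zb vb u : Ev m) : Set (Ev m) :=
  {w | ∀ h ∈ tcone θ.gph (zb, vb), ⟪w, h.1⟫ - ⟪u, h.2⟫ ≤ 0}

end CPWL

section VarSys

variable {n m : ℕ}

/-- The adjoint `∇Φ(x)*` of the Jacobian of `Φ` at `x`. -/
def adjD (Φ : Ev n → Ev m) (x : Ev n) : Ev m →L[ℝ] Ev n :=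
  ContinuousLinearMap.adjoint (fderiv ℝ Φ x)

/-- `Ψ(x,v) = f(x) + ∇Φ(x)* v`. -/
def Psi (f : Ev n → Ev n) (Φ : Ev n → Ev m) (x : Ev n) (v : Ev m) : Ev n :=
  f x + adjD Φ x v

/-- The partial Jacobian `∇ₓΨ(x̄,v̄)`. -/
def gradxPsi (f : Ev n → Ev n) (Φ : Ev n → Ev m) (xb : Ev n) (vb : Ev m) :
    Ev n →L[ℝ] Ev n :=
  fderiv ℝ (fun x => Psi f Φ x vb) xb

/-- The Lagrange multiplier set `Λ(x̄)` of the variational system. -/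
def Lam (f : Ev n → Ev n) (Φ : Ev n → Ev m) (θ : CPWL m) (xb : Ev n) : Set (Ev m) :=
  {v | Psi f Φ xb v = 0 ∧ v ∈ θ.subdiff (Φ xb)}

/-- `v̄` is a critical multiplier for the variational system. -/
def IsCritical (f : Ev n → Ev n) (Φ : Ev n → Ev m) (θ : CPWL m) (xb : Ev n) (vb : Ev m) :
    Prop :=
  ∃ ξ : Ev n, ξ ≠ 0 ∧ ∃ w ∈ θ.Dsub (Φ xb) vb (fderiv ℝ Φ xb ξ),
    gradxPsi f Φ xb vb ξ + adjD Φ xb w = 0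

/-- The solution map of the canonically perturbed variational system. -/
def Smap (f : Ev n → Ev n) (Φ : Ev n → Ev m) (θ : CPWL m) (p₁ : Ev n) (p₂ : Ev m) :
    Set (Ev n × Ev m) :=
  {xv | Psi f Φ xv.1 xv.2 = p₁ ∧ xv.2 ∈ θ.subdiff (Φ xv.1 + p₂)}

end VarSys

section General

variable {n m : ℕ}

/-- The subdifferential of a general extended-real-valued function. -/
def subdiffE (θ : Ev m → EReal) (z : Ev m) : Set (Ev m) :=
  {v | ∀ z', ((⟪v, z' - z⟫ : ℝ) : EReal) ≤ θ z' - θ z}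

/-- The graph of the subdifferential of a general extended-real-valued function. -/
def gphE (θ : Ev m → EReal) : Set (Ev m × Ev m) := {zv | zv.2 ∈ subdiffE θ zv.1}

/-- The graphical derivative of the subdifferential, general case. -/
def DsubE (θ : Ev m → EReal) (zb vb u : Ev m) : Set (Ev m) :=
  {w | (u, w) ∈ tcone (gphE θ) (zb, vb)}

/-- The Lagrange multiplier set, general case. -/
def LamE (f : Ev n → Ev n) (Φ : Ev n → Ev m) (θ : Ev m → EReal) (xb : Ev n) :
    Set (Ev m) :=
  {v | Psi f Φ xb v = 0 ∧ v ∈ subdiffE θ (Φ xb)}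

/-- The solution map of the canonically perturbed variational system, general case. -/
def SmapE (f : Ev n → Ev n) (Φ : Ev n → Ev m) (θ : Ev m → EReal) (p₁ : Ev n)
    (p₂ : Ev m) : Set (Ev n × Ev m) :=
  {xv | Psi f Φ xv.1 xv.2 = p₁ ∧ xv.2 ∈ subdiffE θ (Φ xv.1 + p₂)}

end General

section Composite

variable {n m : ℕ}

/-- The gradient `∇ₓL(·,v)` of the Lagrangian `L(x,v) = φ₀(x) + ⟨Φ(x),v⟩`. -/
def gradL (φ₀ : Ev n → ℝ) (Φ : Ev n → Ev m) (v : Ev m) (x : Ev n) : Ev n :=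
  gradient (fun y => φ₀ y + ⟪Φ y, v⟫) x

/-- The Hessian `∇²ₓₓL(x̄,v)` as a linear operator. -/
def HessOp (φ₀ : Ev n → ℝ) (Φ : Ev n → Ev m) (v : Ev m) (xb : Ev n) : Ev n →L[ℝ] Ev n :=
  fderiv ℝ (gradL φ₀ Φ v) xb

/-- The Lagrange multiplier set `Λ_com(x̄)` of the composite optimization problem. -/
def LamCom (φ₀ : Ev n → ℝ) (Φ : Ev n → Ev m) (θ : CPWL m) (xb : Ev n) : Set (Ev m) :=
  {v | gradient φ₀ xb + adjD Φ xb v = 0 ∧ v ∈ θ.subdiff (Φ xb)}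

/-- Criticality of a multiplier in the composite optimization setting. -/
def IsCriticalCom (φ₀ : Ev n → ℝ) (Φ : Ev n → Ev m) (θ : CPWL m) (xb : Ev n) (v : Ev m) :
    Prop :=
  ∃ ξ : Ev n, ξ ≠ 0 ∧ ∃ w ∈ θ.Dsub (Φ xb) v (fderiv ℝ Φ xb ξ),
    HessOp φ₀ Φ v xb ξ + adjD Φ xb w = 0

/-- The solution map of the canonically perturbed KKT system of composite optimization. -/
def SKKT (φ₀ : Ev n → ℝ) (Φ : Ev n → Ev m) (θ : CPWL m) (p₁ : Ev n) (p₂ : Ev m) :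
    Set (Ev n × Ev m) :=
  {xv | gradient φ₀ xv.1 + adjD Φ xv.1 xv.2 = p₁ ∧ xv.2 ∈ θ.subdiff (Φ xv.1 + p₂)}

/-- `x̄` is a local minimizer of `φ₀ + θ∘Φ`. -/
def LocalMin (φ₀ : Ev n → ℝ) (Φ : Ev n → Ev m) (θ : CPWL m) (xb : Ev n) : Prop :=
  ∃ U ∈ 𝓝 xb, ∀ x ∈ U,
    ((φ₀ xb : ℝ) : EReal) + θ.eval (Φ xb) ≤ ((φ₀ x : ℝ) : EReal) + θ.eval (Φ x)

end Composite

section Calmness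

variable {n m : ℕ}

/-- Isolated calmness of a solution map at `((0,0), q0)`. -/
def IsolCalm (S : Ev n × Ev m → Set (Ev n × Ev m)) (q0 : Ev n × Ev m) : Prop :=
  ∃ c : ℝ, 0 ≤ c ∧ ∃ U ∈ 𝓝 (0 : Ev n × Ev m), ∃ V ∈ 𝓝 q0,
    ∀ p ∈ U, ∀ q ∈ S p ∩ V, ‖q - q0‖ ≤ c * (‖p.1‖ + ‖p.2‖)

/-- Robust isolated calmness of a solution map at `((0,0), q0)`. -/
def RobustIsolCalm (S : Ev n × Ev m → Set (Ev n × Ev m)) (q0 : Ev n × Ev m) : Prop :=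
  ∃ c : ℝ, 0 ≤ c ∧ ∃ U ∈ 𝓝 (0 : Ev n × Ev m), ∃ V ∈ 𝓝 q0,
    (∀ p ∈ U, ∀ q ∈ S p ∩ V, ‖q - q0‖ ≤ c * (‖p.1‖ + ‖p.2‖)) ∧
    (∀ p ∈ U, (S p ∩ V).Nonempty)

/-- The Lipschitz-like (Aubin) property of a solution map around `((0,0), q0)`. -/
def LipschitzLike (S : Ev n × Ev m → Set (Ev n × Ev m)) (q0 : Ev n × Ev m) : Prop :=
  ∃ c : ℝ, 0 ≤ c ∧ ∃ U ∈ 𝓝 (0 : Ev n × Ev m), ∃ V ∈ 𝓝 q0,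
    ∀ p ∈ U, ∀ p' ∈ U, ∀ q ∈ S p ∩ V, ∃ q' ∈ S p', ‖q - q'‖ ≤ c * ‖p - p'‖

end Calmness


section FarkasSec

variable {m : ℕ} {ι : Type*} [Fintype ι]

/-- Nonnegative combinations of `c j`, `j ∈ S`. -/
def coneCombOn (c : ι → Ev m) (S : Finset ι) : Set (Ev m) :=
  {x | ∃ lam : ι → ℝ, (∀ j, 0 ≤ lam j) ∧ (∀ j, j ∉ S → lam j = 0) ∧ x = ∑ j ∈ S, lam j • c j}

lemma coneCombOn_mono (c : ι → Ev m) {S T : Finset ι} (hST : S ⊆ T) :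
    coneCombOn c S ⊆ coneCombOn c T := by
  rintro x ⟨lam, h0, hs, rfl⟩
  refine ⟨lam, h0, fun j hj => hs j (fun hjS => hj (hST hjS)), ?_⟩
  exact Finset.sum_subset hST (fun j _ hjS => by rw [hs j hjS, zero_smul])

lemma caratheodory_cone (c : ι → Ev m) (S : Finset ι) :
    ∀ x ∈ coneCombOn c S, ∃ T : Finset ι, T ⊆ S ∧
      LinearIndependent ℝ (fun j : T => c (j : ι)) ∧ x ∈ coneCombOn c T := by
  classical
  induction S using Finset.strongInductionOn with
  | _ S IH =>
    intro x hx
    by_cases hLI : LinearIndependent ℝ (fun j : S => c (j : ι))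
    · exact ⟨S, Finset.Subset.refl S, hLI, hx⟩
    · obtain ⟨lam, hlam0, hlamsupp, rfl⟩ := hx
      obtain ⟨g, hgsum, j1, hj1⟩ := Fintype.not_linearIndependent_iff.mp hLI
      -- normalize so that some coefficient is positive
      set s : ℝ := if 0 < g j1 then 1 else -1 with hs
      have hs0 : s ≠ 0 := by
        rcases le_or_gt (g j1) 0 with h | h
        · simp [hs, not_lt.mpr h]
        · simp [hs, h]
      set G : ι → ℝ := fun j => if h : j ∈ S then s * g ⟨j, h⟩ else 0 with hG
      have hGsum : ∑ j ∈ S, G j • c j = 0 := by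
        have h1 : ∑ j ∈ S, G j • c j = ∑ j : S, (s * g j) • c (j : ι) := by
          rw [← Finset.sum_coe_sort S (fun j => G j • c j)]
          exact Finset.sum_congr rfl (fun j _ => by simp [hG])
        rw [h1]
        have : ∑ j : S, (s * g j) • c (j : ι) = s • ∑ j : S, g j • c (j : ι) := by
          rw [Finset.smul_sum]
          exact Finset.sum_congr rfl (fun j _ => (smul_smul s (g j) (c (j:ι))).symm)
        rw [this, hgsum, smul_zero]
      have hj1pos : 0 < G (j1 : ι) := by
        have hmem : (j1 : ι) ∈ S := j1.2
        have : G (j1 : ι) = s * g j1 := by simp [hG, hmem]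
        rw [this]
        rcases lt_or_ge 0 (g j1) with h | h
        · simpa [hs, h] using h
        · have hneg : g j1 < 0 := lt_of_le_of_ne h hj1
          have : s = -1 := by simp [hs, not_lt.mpr h]
          rw [this]; nlinarith
      -- minimize ratio over positive coefficients
      set P : Finset ι := S.filter (fun j => 0 < G j) with hP
      have hPne : P.Nonempty := ⟨(j1 : ι), by simp [hP, j1.2, hj1pos]⟩
      obtain ⟨j0, hj0P, hj0min⟩ := Finset.exists_min_image P (fun j => lam j / G j) hPne
      have hj0S : j0 ∈ S := (Finset.mem_filter.mp hj0P).1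
      have hGj0 : 0 < G j0 := (Finset.mem_filter.mp hj0P).2
      set t : ℝ := lam j0 / G j0 with ht
      have ht0 : 0 ≤ t := div_nonneg (hlam0 j0) hGj0.le
      set lam' : ι → ℝ := fun j => lam j - t * G j with hlam'
      have hlam'0 : ∀ j, 0 ≤ lam' j := by
        intro j
        by_cases hjS : j ∈ S
        · by_cases hGj : 0 < G j
          · have hjP : j ∈ P := Finset.mem_filter.mpr ⟨hjS, hGj⟩
            have := hj0min j hjP
            have : t * G j ≤ lam j := by
              rw [← le_div_iff₀ hGj]; exact this
            simp only [hlam']; linarith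
          · have : t * G j ≤ 0 := mul_nonpos_of_nonneg_of_nonpos ht0 (not_lt.mp hGj)
            have := hlam0 j
            simp only [hlam']; linarith
        · have : G j = 0 := by simp [hG, hjS]
          simp only [hlam', this, mul_zero, sub_zero]
          exact hlam0 j
      have hlam'j0 : lam' j0 = 0 := by
        simp only [hlam', ht]
        rw [div_mul_cancel₀ _ hGj0.ne', sub_self]
      have hsum' : ∑ j ∈ S, lam' j • c j = ∑ j ∈ S, lam j • c j := by
        have : ∑ j ∈ S, lam' j • c j
            = ∑ j ∈ S, lam j • c j - ∑ j ∈ S, (t * G j) • c j := by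
          rw [← Finset.sum_sub_distrib]
          exact Finset.sum_congr rfl (fun j _ => by rw [hlam', sub_smul])
        rw [this]
        have : ∑ j ∈ S, (t * G j) • c j = t • ∑ j ∈ S, G j • c j := by
          rw [Finset.smul_sum]
          exact Finset.sum_congr rfl (fun j _ => (smul_smul t (G j) (c j)).symm)
        rw [this, hGsum, smul_zero, sub_zero]
      have hmem : (∑ j ∈ S, lam j • c j) ∈ coneCombOn c (S.erase j0) := by
        refine ⟨lam', hlam'0, ?_, ?_⟩
        · intro j hj
          by_cases hjS : j ∈ S
          · have : j = j0 := by
              by_contra hne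
              exact hj (Finset.mem_erase.mpr ⟨hne, hjS⟩)
            rw [this]; exact hlam'j0
          · have h1 : lam j = 0 := hlamsupp j hjS
            have h2 : G j = 0 := by simp [hG, hjS]
            simp [hlam', h1, h2]
        · rw [← hsum']
          refine (Finset.sum_subset (Finset.erase_subset j0 S) ?_).symm
          intro j hjS hj
          have : j = j0 := by
            by_contra hne
            exact hj (Finset.mem_erase.mpr ⟨hne, hjS⟩)
          rw [this, hlam'j0, zero_smul]
      obtain ⟨T, hTsub, hTLI, hxT⟩ := IH (S.erase j0) (Finset.erase_ssubset hj0S) _ hmem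
      exact ⟨T, hTsub.trans (Finset.erase_subset j0 S), hTLI, hxT⟩

lemma isClosed_coneCombOn_of_li (c : ι → Ev m) (S : Finset ι)
    (hLI : LinearIndependent ℝ (fun j : S => c (j : ι))) :
    IsClosed (coneCombOn c S) := by
  classical
  set L : (↥S → ℝ) →ₗ[ℝ] Ev m :=
    { toFun := fun lam => ∑ j : S, lam j • c (j : ι)
      map_add' := by
        intro a b
        rw [← Finset.sum_add_distrib]
        exact Finset.sum_congr rfl (fun j _ => by rw [Pi.add_apply, add_smul])
      map_smul' := by
        intro r a
        rw [Finset.smul_sum]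
        exact Finset.sum_congr rfl (fun j _ => by
          rw [Pi.smul_apply, smul_smul, smul_eq_mul, RingHom.id_apply]) } with hL
  have hker : LinearMap.ker L = ⊥ := by
    rw [LinearMap.ker_eq_bot']
    intro lam hlam
    have := Fintype.linearIndependent_iff.mp hLI lam hlam
    funext j
    exact this j
  have hemb : IsClosedEmbedding L := LinearMap.isClosedEmbedding_of_injective hker
  have hQ : IsClosed {lam : ↥S → ℝ | ∀ j, 0 ≤ lam j} := by
    have : {lam : ↥S → ℝ | ∀ j, 0 ≤ lam j} = ⋂ j, {lam | 0 ≤ lam j} := by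
      ext lam; simp [Set.mem_iInter]
    rw [this]
    exact isClosed_iInter (fun j => isClosed_le continuous_const (continuous_apply j))
  have himg : coneCombOn c S = L '' {lam | ∀ j, 0 ≤ lam j} := by
    ext x
    constructor
    · rintro ⟨lam, h0, hsupp, rfl⟩
      refine ⟨fun j => lam j, fun j => h0 j, ?_⟩
      simp only [hL, LinearMap.coe_mk, AddHom.coe_mk]
      exact Finset.sum_coe_sort S (fun j => lam j • c j)
    · rintro ⟨lamS, h0, rfl⟩
      refine ⟨fun j => if h : j ∈ S then lamS ⟨j, h⟩ else 0, ?_, ?_, ?_⟩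
      · intro j
        by_cases h : j ∈ S
        · simpa [h] using h0 ⟨j, h⟩
        · simp [h]
      · intro j hj; simp [hj]
      · simp only [hL, LinearMap.coe_mk, AddHom.coe_mk]
        rw [← Finset.sum_coe_sort S (fun j => (if h : j ∈ S then lamS ⟨j, h⟩ else 0) • c j)]
        exact (Finset.sum_congr rfl (fun j _ => by simp)).symm
  rw [himg]
  exact hemb.isClosedMap _ hQ

lemma isClosed_coneCombOn_univ (c : ι → Ev m) :
    IsClosed (coneCombOn c Finset.univ) := by
  classical
  have hun : coneCombOn c Finset.univ =
      ⋃ T ∈ {T : Finset ι | LinearIndependent ℝ (fun j : T => c (j : ι))},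
        coneCombOn c T := by
    ext x
    simp only [Set.mem_iUnion, Set.mem_setOf_eq]
    constructor
    · intro hx
      obtain ⟨T, _, hTLI, hxT⟩ := caratheodory_cone c Finset.univ x hx
      exact ⟨T, hTLI, hxT⟩
    · rintro ⟨T, _, hxT⟩
      exact coneCombOn_mono c (Finset.subset_univ T) hxT
  rw [hun]
  exact Set.Finite.isClosed_biUnion (Set.toFinite _)
    (fun T hT => isClosed_coneCombOn_of_li c T hT)

lemma mem_coneCombOn_single (c : ι → Ev m) (j : ι) : c j ∈ coneCombOn c Finset.univ := by
  classical
  refine ⟨fun j' => if j' = j then 1 else 0, ?_, by simp, ?_⟩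
  · intro j'; by_cases h : j' = j <;> simp [h]
  · simp [Finset.sum_ite_eq']

lemma farkas (c : ι → Ev m) (h : Ev m)
    (hyp : ∀ w : Ev m, (∀ j, ⟪c j, w⟫ ≤ 0) → ⟪h, w⟫ ≤ 0) :
    ∃ lam : ι → ℝ, (∀ j, 0 ≤ lam j) ∧ h = ∑ j, lam j • c j := by
  classical
  by_contra hn
  have hnot : h ∉ coneCombOn c Finset.univ := by
    intro ⟨lam, h0, _, hsum⟩
    exact hn ⟨lam, h0, hsum⟩
  set K : ConvexCone ℝ (Ev m) :=
    { carrier := coneCombOn c Finset.univ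
      smul_mem' := by
        rintro t ht x ⟨lam, h0, _, rfl⟩
        refine ⟨fun j => t * lam j, fun j => mul_nonneg ht.le (h0 j), by simp, ?_⟩
        rw [Finset.smul_sum]
        exact Finset.sum_congr rfl (fun j _ => smul_smul t (lam j) (c j))
      add_mem' := by
        rintro x ⟨lam, h0, _, rfl⟩ y ⟨lam', h0', _, rfl⟩
        refine ⟨fun j => lam j + lam' j, fun j => add_nonneg (h0 j) (h0' j), by simp, ?_⟩
        rw [← Finset.sum_add_distrib]
        exact Finset.sum_congr rfl (fun j _ => by rw [add_smul]) } with hK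
  have hne : (K : Set (Ev m)).Nonempty := ⟨0, ⟨0, fun j => le_refl 0, fun j _ => rfl, by simp⟩⟩
  have hclosed : IsClosed (K : Set (Ev m)) := isClosed_coneCombOn_univ c
  set C : ProperCone ℝ (Ev m) :=
    { carrier := coneCombOn c Finset.univ
      add_mem' := fun hx hy => K.add_mem' hx hy
      zero_mem' := ⟨0, fun j => le_refl 0, fun j _ => rfl, by simp⟩
      smul_mem' := by
        rintro t x ⟨lam, h0, _, rfl⟩
        refine ⟨fun j => t * lam j, fun j => mul_nonneg t.2 (h0 j), by simp, ?_⟩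
        show (t : ℝ) • ∑ j, lam j • c j = _
        rw [Finset.smul_sum]
        exact Finset.sum_congr rfl (fun j _ => smul_smul _ (lam j) (c j))
      isClosed' := hclosed } with hC
  obtain ⟨y, hy1, hy2⟩ :=
    ProperCone.hyperplane_separation' C hnot
  have hw : ∀ j, ⟪c j, -y⟫ ≤ 0 := by
    intro j
    have := hy1 (c j) (mem_coneCombOn_single c j)
    rw [inner_neg_right]
    linarith
  have := hyp (-y) hw
  rw [inner_neg_right] at this
  linarith

end FarkasSec

section CPWLBasic

namespace CPWL

variable {m : ℕ} (θ : CPWL m)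

lemma finl_nonempty : Nonempty (Fin θ.l) := ⟨⟨0, θ.hl⟩⟩

lemma le_val (z : Ev m) (i : Fin θ.l) : ⟪θ.a i, z⟫ - θ.al i ≤ θ.val z := by
  haveI := θ.finl_nonempty
  exact le_ciSup (f := fun i : Fin θ.l => ⟪θ.a i, z⟫ - θ.al i)
    (Set.Finite.bddAbove (Set.finite_range _)) i

lemma exists_active (z : Ev m) : ∃ i, i ∈ θ.Kact z := by
  haveI := θ.finl_nonempty
  obtain ⟨i0, hi0⟩ := Finite.exists_max (fun i : Fin θ.l => ⟪θ.a i, z⟫ - θ.al i)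
  refine ⟨i0, le_antisymm ?_ (θ.le_val z i0)⟩
  show (⨆ i : Fin θ.l, (⟪θ.a i, z⟫ - θ.al i)) ≤ _
  exact ciSup_le hi0

lemma mem_Kact {z : Ev m} {i : Fin θ.l} :
    i ∈ θ.Kact z ↔ θ.val z = ⟪θ.a i, z⟫ - θ.al i := Iff.rfl

lemma mem_Iact {z : Ev m} {i : Fin θ.p} :
    i ∈ θ.Iact z ↔ ⟪θ.d i, z⟫ = θ.be i := Iff.rfl

lemma mem_dom {z : Ev m} : z ∈ θ.dom ↔ ∀ i, ⟪θ.d i, z⟫ ≤ θ.be i := Iff.rfl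

lemma lin_apply (i : Fin θ.l) (z w : Ev m) (t : ℝ) :
    ⟪θ.a i, z + t • w⟫ - θ.al i = (⟪θ.a i, z⟫ - θ.al i) + t * ⟪θ.a i, w⟫ := by
  rw [inner_add_right, real_inner_smul_right]; ring

lemma val_le_of_forall {z : Ev m} {r : ℝ} (h : ∀ i, ⟪θ.a i, z⟫ - θ.al i ≤ r) :
    θ.val z ≤ r := by
  haveI := θ.finl_nonempty
  show (⨆ i : Fin θ.l, (⟪θ.a i, z⟫ - θ.al i)) ≤ r
  exact ciSup_le h

/-- Along a ray, the value of the CPWL function is eventually given by an index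
active at the base point. -/
lemma ray (z w : Ev m) :
    ∀ᶠ t in 𝓝[>] (0:ℝ), ∃ i ∈ θ.Kact z,
      θ.val (z + t • w) = θ.val z + t * ⟪θ.a i, w⟫ := by
  haveI : Nonempty {i // i ∈ θ.Kact z} := by
    obtain ⟨i, hi⟩ := θ.exists_active z
    exact ⟨⟨i, hi⟩⟩
  obtain ⟨i0, hi0max⟩ := Finite.exists_max (fun i : {i // i ∈ θ.Kact z} => ⟪θ.a i, w⟫)
  have hEj : ∀ j : Fin θ.l, ∀ᶠ t in 𝓝[>] (0:ℝ),
      (⟪θ.a j, z⟫ - θ.al j) + t * ⟪θ.a j, w⟫ ≤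
      (⟪θ.a i0, z⟫ - θ.al i0) + t * ⟪θ.a i0, w⟫ := by
    intro j
    by_cases hj : j ∈ θ.Kact z
    · have h1 : ⟪θ.a j, z⟫ - θ.al j = ⟪θ.a (i0 : Fin θ.l), z⟫ - θ.al i0 := by
        rw [← (θ.mem_Kact.mp hj), ← (θ.mem_Kact.mp i0.2)]
      have h2 : ⟪θ.a j, w⟫ ≤ ⟪θ.a (i0 : Fin θ.l), w⟫ := hi0max ⟨j, hj⟩
      filter_upwards [self_mem_nhdsWithin] with t ht
      have ht' : (0:ℝ) ≤ t := le_of_lt ht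
      rw [h1]
      exact add_le_add le_rfl (mul_le_mul_of_nonneg_left h2 ht')
    · have hlt : ⟪θ.a j, z⟫ - θ.al j < ⟪θ.a (i0 : Fin θ.l), z⟫ - θ.al i0 := by
        rw [← (θ.mem_Kact.mp i0.2)]
        exact lt_of_le_of_ne (θ.le_val z j) (fun h => hj (θ.mem_Kact.mpr h.symm))
      have hopen : IsOpen {t : ℝ | (⟪θ.a j, z⟫ - θ.al j) + t * ⟪θ.a j, w⟫ <
          (⟪θ.a i0, z⟫ - θ.al i0) + t * ⟪θ.a i0, w⟫} := by
        apply isOpen_lt <;> continuity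
      have hmem : (0:ℝ) ∈ {t : ℝ | (⟪θ.a j, z⟫ - θ.al j) + t * ⟪θ.a j, w⟫ <
          (⟪θ.a i0, z⟫ - θ.al i0) + t * ⟪θ.a i0, w⟫} := by
        simpa using hlt
      have hevn : ∀ᶠ t in 𝓝 (0:ℝ), (⟪θ.a j, z⟫ - θ.al j) + t * ⟪θ.a j, w⟫ <
          (⟪θ.a i0, z⟫ - θ.al i0) + t * ⟪θ.a i0, w⟫ := hopen.mem_nhds hmem
      exact (eventually_nhdsWithin_of_eventually_nhds hevn).mono (fun t h => le_of_lt h)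
  have hAll := (Filter.eventually_all (ι := Fin θ.l)).mpr hEj
  filter_upwards [hAll] with t ht
  refine ⟨i0, i0.2, ?_⟩
  have hval : θ.val (z + t • w) = ⟪θ.a (i0 : Fin θ.l), z + t • w⟫ - θ.al i0 := by
    refine le_antisymm (θ.val_le_of_forall ?_) (θ.le_val _ _)
    intro j
    rw [θ.lin_apply j z w t, θ.lin_apply i0 z w t]
    exact ht j
  rw [hval, θ.lin_apply i0 z w t, ← (θ.mem_Kact.mp i0.2)]

/-- Along a feasible direction, points on the ray eventually stay in the domain. -/
lemma domRay (z w : Ev m) (hz : z ∈ θ.dom)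
    (hw : ∀ i ∈ θ.Iact z, ⟪θ.d i, w⟫ ≤ 0) :
    ∀ᶠ t in 𝓝[>] (0:ℝ), z + t • w ∈ θ.dom := by
  have hEi : ∀ i : Fin θ.p, ∀ᶠ t in 𝓝[>] (0:ℝ), ⟪θ.d i, z + t • w⟫ ≤ θ.be i := by
    intro i
    by_cases hi : i ∈ θ.Iact z
    · filter_upwards [self_mem_nhdsWithin] with t ht
      rw [inner_add_right, real_inner_smul_right, θ.mem_Iact.mp hi]
      nlinarith [hw i hi, le_of_lt (show (0:ℝ) < t from ht)]
    · have hlt : ⟪θ.d i, z⟫ < θ.be i := lt_of_le_of_ne (hz i) hi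
      have hopen : IsOpen {t : ℝ | ⟪θ.d i, z⟫ + t * ⟪θ.d i, w⟫ < θ.be i} := by
        apply isOpen_lt <;> continuity
      have hmem : (0:ℝ) ∈ {t : ℝ | ⟪θ.d i, z⟫ + t * ⟪θ.d i, w⟫ < θ.be i} := by
        simpa using hlt
      have hevn : ∀ᶠ t in 𝓝 (0:ℝ), ⟪θ.d i, z⟫ + t * ⟪θ.d i, w⟫ < θ.be i :=
        hopen.mem_nhds hmem
      refine (eventually_nhdsWithin_of_eventually_nhds hevn).mono (fun t h => ?_)
      rw [inner_add_right, real_inner_smul_right]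
      exact le_of_lt h
  have hAll := (Filter.eventually_all (ι := Fin θ.p)).mpr hEi
  exact hAll.mono (fun t ht => ht)

/-- A subgradient is dominated by some active linear piece in any feasible direction. -/
lemma subgrad_dir_le {z v : Ev m} (hv : v ∈ θ.subdiff z) {w : Ev m}
    (hw : ∀ j ∈ θ.Iact z, ⟪θ.d j, w⟫ ≤ 0) :
    ∃ i ∈ θ.Kact z, ⟪v, w⟫ ≤ ⟪θ.a i, w⟫ := by
  have hev := (θ.ray z w).and ((θ.domRay z w hv.1 hw).and self_mem_nhdsWithin)
  obtain ⟨t, ⟨⟨i, hiK, hival⟩, hdom, ht⟩⟩ := hev.exists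
  refine ⟨i, hiK, ?_⟩
  have hsub := hv.2 (z + t • w) hdom
  rw [add_sub_cancel_left, real_inner_smul_right, hival] at hsub
  have : t * ⟪v, w⟫ ≤ t * ⟪θ.a i, w⟫ := by linarith
  exact le_of_mul_le_mul_left this ht

/-- Semicontinuity of active sets along a converging sequence. -/
lemma eventually_active_subset {z : ℕ → Ev m} {zb : Ev m} (hzb : zb ∈ θ.dom)
    (hz : Filter.Tendsto z Filter.atTop (𝓝 zb)) :
    ∀ᶠ k in Filter.atTop, (∀ i, i ∈ θ.Kact (z k) → i ∈ θ.Kact zb) ∧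
      (∀ i, i ∈ θ.Iact (z k) → i ∈ θ.Iact zb) := by
  obtain ⟨i0, hi0⟩ := θ.exists_active zb
  have hKs : ∀ i : Fin θ.l, ∀ᶠ k in Filter.atTop, (i ∈ θ.Kact (z k) → i ∈ θ.Kact zb) := by
    intro i
    by_cases hi : i ∈ θ.Kact zb
    · exact Filter.Eventually.of_forall (fun k _ => hi)
    · have hlt : ⟪θ.a i, zb⟫ - θ.al i < ⟪θ.a i0, zb⟫ - θ.al i0 := by
        rw [← (θ.mem_Kact.mp hi0)]
        exact lt_of_le_of_ne (θ.le_val zb i) (fun h => hi (θ.mem_Kact.mpr h.symm))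
      have h1 : Filter.Tendsto (fun k => ⟪θ.a i, z k⟫ - θ.al i) Filter.atTop
          (𝓝 (⟪θ.a i, zb⟫ - θ.al i)) :=
        ((Filter.Tendsto.inner tendsto_const_nhds hz).sub tendsto_const_nhds)
      have h2 : Filter.Tendsto (fun k => ⟪θ.a i0, z k⟫ - θ.al i0) Filter.atTop
          (𝓝 (⟪θ.a i0, zb⟫ - θ.al i0)) :=
        ((Filter.Tendsto.inner tendsto_const_nhds hz).sub tendsto_const_nhds)
      filter_upwards [h1.eventually_lt h2 hlt] with k hk hmem
      exfalso
      have := θ.le_val (z k) i0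
      rw [θ.mem_Kact.mp hmem] at this
      linarith
  have hIs : ∀ i : Fin θ.p, ∀ᶠ k in Filter.atTop, (i ∈ θ.Iact (z k) → i ∈ θ.Iact zb) := by
    intro i
    by_cases hi : i ∈ θ.Iact zb
    · exact Filter.Eventually.of_forall (fun k _ => hi)
    · have hlt : ⟪θ.d i, zb⟫ < θ.be i := lt_of_le_of_ne (hzb i) hi
      have h1 : Filter.Tendsto (fun k => ⟪θ.d i, z k⟫) Filter.atTop (𝓝 ⟪θ.d i, zb⟫) :=
        Filter.Tendsto.inner tendsto_const_nhds hz
      filter_upwards [h1.eventually_lt tendsto_const_nhds hlt] with k hk hmem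
      exact absurd (θ.mem_Iact.mp hmem) (ne_of_lt hk)
  exact ((Filter.eventually_all.mpr hKs).and (Filter.eventually_all.mpr hIs)).mono
    (fun k hk => hk)

end CPWL

end CPWLBasic

section TangentChar

variable {m : ℕ}

/-- The critical cone of the CPWL function `θ` at `(zb, vb)`. -/
def Kcone (θ : CPWL m) (zb vb : Ev m) : Set (Ev m) :=
  {w | (∀ i ∈ θ.Iact zb, ⟪θ.d i, w⟫ ≤ 0) ∧ (∀ i ∈ θ.Kact zb, ⟪θ.a i, w⟫ ≤ ⟪vb, w⟫)}

/-- The graph of the normal cone mapping of the critical cone. -/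
def Gset (θ : CPWL m) (zb vb : Ev m) : Set (Ev m × Ev m) :=
  {h | h.1 ∈ Kcone θ zb vb ∧ (∀ w ∈ Kcone θ zb vb, ⟪h.2, w⟫ ≤ 0) ∧ ⟪h.1, h.2⟫ = 0}

lemma tcone_gph_subset_Gset (θ : CPWL m) {zb vb : Ev m} (hsub : vb ∈ θ.subdiff zb) :
    tcone θ.gph (zb, vb) ⊆ Gset θ zb vb := by
  rintro ⟨h1, h2⟩ ⟨q, cseq, hqmem, hc0, hqlim, hslim⟩
  set zk : ℕ → Ev m := fun k => (q k).1 with hzkdef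
  set vk : ℕ → Ev m := fun k => (q k).2 with hvkdef
  have hgph : ∀ k, vk k ∈ θ.subdiff (zk k) := fun k => hqmem k
  have hzk : Filter.Tendsto zk Filter.atTop (𝓝 zb) :=
    (continuous_fst.tendsto (zb, vb)).comp hqlim
  have hvk : Filter.Tendsto vk Filter.atTop (𝓝 vb) :=
    (continuous_snd.tendsto (zb, vb)).comp hqlim
  have hulim : Filter.Tendsto (fun k => cseq k • (zk k - zb)) Filter.atTop (𝓝 h1) := by
    have := (continuous_fst.tendsto (h1, h2)).comp hslim
    simpa [Function.comp_def] using this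
  have hylim : Filter.Tendsto (fun k => cseq k • (vk k - vb)) Filter.atTop (𝓝 h2) := by
    have := (continuous_snd.tendsto (h1, h2)).comp hslim
    simpa [Function.comp_def] using this
  have hKc : h1 ∈ Kcone θ zb vb := by
    constructor
    · intro i hi
      have hev : ∀ k, ⟪θ.d i, cseq k • (zk k - zb)⟫ ≤ 0 := by
        intro k
        rw [real_inner_smul_right]
        have h1' : ⟪θ.d i, zk k - zb⟫ ≤ 0 := by
          rw [inner_sub_right, θ.mem_Iact.mp hi]
          have := (hgph k).1 i
          linarith
        nlinarith [hc0 k]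
      exact le_of_tendsto (Filter.Tendsto.inner tendsto_const_nhds hulim)
        (Filter.Eventually.of_forall hev)
    · intro i hi
      have hev : ∀ k, ⟪θ.a i - vk k, cseq k • (zk k - zb)⟫ ≤ 0 := by
        intro k
        rw [real_inner_smul_right]
        have hineq : ⟪θ.a i - vk k, zk k - zb⟫ ≤ 0 := by
          have hs := (hgph k).2 zb hsub.1
          have hval1 : θ.val zb = ⟪θ.a i, zb⟫ - θ.al i := θ.mem_Kact.mp hi
          have hval2 : ⟪θ.a i, zk k⟫ - θ.al i ≤ θ.val (zk k) := θ.le_val _ i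
          simp only [inner_sub_left, inner_sub_right] at hs ⊢
          linarith
        nlinarith [hc0 k]
      have hlim : Filter.Tendsto (fun k => ⟪θ.a i - vk k, cseq k • (zk k - zb)⟫)
          Filter.atTop (𝓝 ⟪θ.a i - vb, h1⟫) :=
        Filter.Tendsto.inner (tendsto_const_nhds.sub hvk) hulim
      have := le_of_tendsto hlim (Filter.Eventually.of_forall hev)
      rw [inner_sub_left] at this
      linarith
  have hpolar : ∀ w ∈ Kcone θ zb vb, ⟪h2, w⟫ ≤ 0 := by
    intro w hw
    have hev : ∀ᶠ k in Filter.atTop, ⟪cseq k • (vk k - vb), w⟫ ≤ 0 := by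
      filter_upwards [θ.eventually_active_subset hsub.1 hzk] with k hk
      have hIw : ∀ j ∈ θ.Iact (zk k), ⟪θ.d j, w⟫ ≤ 0 := fun j hj => hw.1 j (hk.2 j hj)
      obtain ⟨i, hiK, hle⟩ := θ.subgrad_dir_le (hgph k) hIw
      have h2' : ⟪θ.a i, w⟫ ≤ ⟪vb, w⟫ := hw.2 i (hk.1 i hiK)
      have hvw : ⟪vk k - vb, w⟫ ≤ 0 := by
        rw [inner_sub_left]; linarith
      rw [real_inner_smul_left]
      nlinarith [hc0 k]
    exact le_of_tendsto (Filter.Tendsto.inner hylim tendsto_const_nhds) hev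
  refine ⟨hKc, hpolar, ?_⟩
  have hge : 0 ≤ ⟪h1, h2⟫ := by
    have hev : ∀ k, 0 ≤ ⟪cseq k • (zk k - zb), cseq k • (vk k - vb)⟫ := by
      intro k
      rw [real_inner_smul_left, real_inner_smul_right]
      have hmono : 0 ≤ ⟪zk k - zb, vk k - vb⟫ := by
        have hs1 := (hgph k).2 zb hsub.1
        have hs2 := hsub.2 (zk k) (hgph k).1
        simp only [inner_sub_left, inner_sub_right] at hs1 hs2 ⊢
        have c1 : ⟪zk k, vk k⟫ = ⟪vk k, zk k⟫ := real_inner_comm _ _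
        have c2 : ⟪zk k, vb⟫ = ⟪vb, zk k⟫ := real_inner_comm _ _
        have c3 : ⟪zb, vk k⟫ = ⟪vk k, zb⟫ := real_inner_comm _ _
        have c4 : ⟪zb, vb⟫ = ⟪vb, zb⟫ := real_inner_comm _ _
        linarith
      nlinarith [mul_nonneg (mul_nonneg (hc0 k) (hc0 k)) hmono]
    exact ge_of_tendsto (Filter.Tendsto.inner hulim hylim)
      (Filter.Eventually.of_forall hev)
  have hle : ⟪h1, h2⟫ ≤ 0 := by
    rw [real_inner_comm]
    exact hpolar h1 hKc
  linarith

end TangentChar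

section TangentChar2

variable {m : ℕ}

lemma Gset_subset_tcone (θ : CPWL m) {zb vb : Ev m} (hsub : vb ∈ θ.subdiff zb) :
    Gset θ zb vb ⊆ tcone θ.gph (zb, vb) := by
  classical
  rintro ⟨h1, h2⟩ ⟨⟨hI, hK⟩, hpolar, horth⟩
  -- decompose h2 by Farkas' lemma
  set c : Fin θ.p ⊕ Fin θ.l → Ev m :=
    Sum.elim (fun i => if i ∈ θ.Iact zb then θ.d i else 0)
      (fun i => if i ∈ θ.Kact zb then θ.a i - vb else 0) with hc
  have hyp : ∀ w : Ev m, (∀ j, ⟪c j, w⟫ ≤ 0) → ⟪h2, w⟫ ≤ 0 := by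
    intro w hw
    refine hpolar w ⟨?_, ?_⟩
    · intro i hi
      have := hw (Sum.inl i)
      simpa [hc, hi] using this
    · intro i hi
      have := hw (Sum.inr i)
      simp only [hc, Sum.elim_inr, if_pos hi, inner_sub_left] at this
      linarith
  obtain ⟨lam, hlam0, hdecomp⟩ := farkas c h2 hyp
  -- complementary slackness
  have hterm : ∀ j, lam j * ⟪c j, h1⟫ ≤ 0 := by
    intro j
    rcases j with i | i
    · by_cases hi : i ∈ θ.Iact zb
      · have : ⟪c (Sum.inl i), h1⟫ ≤ 0 := by simpa [hc, hi] using hI i hi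
        nlinarith [hlam0 (Sum.inl i)]
      · simp [hc, hi]
    · by_cases hi : i ∈ θ.Kact zb
      · have : ⟪c (Sum.inr i), h1⟫ ≤ 0 := by
          have := hK i hi
          simp only [hc, Sum.elim_inr, if_pos hi, inner_sub_left]
          linarith
        nlinarith [hlam0 (Sum.inr i)]
      · simp [hc, hi]
  have hcomp : ∀ j, lam j * ⟪c j, h1⟫ = 0 := by
    have hsum0 : ∑ j, lam j * ⟪c j, h1⟫ = 0 := by
      have : ⟪h2, h1⟫ = 0 := by rw [real_inner_comm]; exact horth
      rw [hdecomp, sum_inner] at this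
      rw [← this]
      exact Finset.sum_congr rfl (fun j _ => by rw [real_inner_smul_left])
    intro j
    exact (Finset.sum_eq_zero_iff_of_nonpos (fun j _ => hterm j)).mp hsum0 j
      (Finset.mem_univ j)
  -- the value identity along the ray
  have hvalId : ∀ᶠ t in 𝓝[>] (0:ℝ), (zb + t • h1 ∈ θ.dom) ∧
      θ.val (zb + t • h1) = θ.val zb + t * ⟪vb, h1⟫ := by
    filter_upwards [θ.domRay zb h1 hsub.1 hI, θ.ray zb h1, self_mem_nhdsWithin]
      with t hdom ⟨i, hiK, hival⟩ ht
    refine ⟨hdom, ?_⟩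
    have hsle : t * ⟪vb, h1⟫ ≤ t * ⟪θ.a i, h1⟫ := by
      have := hsub.2 (zb + t • h1) hdom
      rw [add_sub_cancel_left, real_inner_smul_right, hival] at this
      linarith
    have h1' : ⟪vb, h1⟫ ≤ ⟪θ.a i, h1⟫ := le_of_mul_le_mul_left hsle ht
    have h2' : ⟪θ.a i, h1⟫ = ⟪vb, h1⟫ := le_antisymm (hK i hiK) h1'
    rw [hival, h2']
  set muh : ℝ := ∑ i : Fin θ.l, lam (Sum.inr i) with hmuh
  have hmuh0 : 0 ≤ muh := Finset.sum_nonneg (fun i _ => hlam0 (Sum.inr i))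
  have hsmall : ∀ᶠ t in 𝓝[>] (0:ℝ), t * muh ≤ 1 := by
    have hopen : IsOpen {t : ℝ | t * muh < 1} :=
      isOpen_lt (continuous_id.mul continuous_const) continuous_const
    have hmem : (0:ℝ) ∈ {t : ℝ | t * muh < 1} := by norm_num
    have hevn : ∀ᶠ t in 𝓝 (0:ℝ), t * muh < 1 := hopen.mem_nhds hmem
    exact (eventually_nhdsWithin_of_eventually_nhds hevn).mono (fun t h => le_of_lt h)
  -- membership of the perturbed pair in the graph
  have hgmem : ∀ᶠ t in 𝓝[>] (0:ℝ), (zb + t • h1, vb + t • h2) ∈ θ.gph := by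
    filter_upwards [hvalId, hsmall, self_mem_nhdsWithin] with t hval ht1 ht
    obtain ⟨hdom_t, hval_t⟩ := hval
    refine ⟨hdom_t, ?_⟩
    intro z' hz'
    set zt : Ev m := zb + t • h1 with hzt
    set ζ : Ev m := z' - zt with hζ
    set D : ℝ := θ.val z' - θ.val zt with hD
    set A : ℝ := ⟪vb, ζ⟫ with hA
    have hAD : A ≤ D := by
      have hvbz : ⟪vb, z' - zb⟫ ≤ θ.val z' - θ.val zb := hsub.2 z' hz'
      have : A = ⟪vb, z' - zb⟫ - t * ⟪vb, h1⟫ := by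
        simp only [hA, hζ, hzt, inner_sub_right, inner_add_right, real_inner_smul_right]
        ring
      rw [this, hD, hval_t]
      linarith
    have hterm2 : ∀ j, lam j * ⟪c j, ζ⟫ ≤
        Sum.elim (fun _ : Fin θ.p => (0:ℝ)) (fun i => lam (Sum.inr i) * (D - A)) j := by
      intro j
      rcases j with i | i
      · simp only [Sum.elim_inl]
        by_cases hi : i ∈ θ.Iact zb
        · by_cases hl : lam (Sum.inl i) = 0
          · simp [hl]
          · have hlpos : 0 < lam (Sum.inl i) :=
              lt_of_le_of_ne (hlam0 (Sum.inl i)) (Ne.symm hl)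
            have hdh1 : ⟪θ.d i, h1⟫ = 0 := by
              have := hcomp (Sum.inl i)
              simp only [hc, Sum.elim_inl, if_pos hi] at this
              rcases mul_eq_zero.mp this with h | h
              · exact absurd h hl
              · exact h
            have hdzt : ⟪θ.d i, zt⟫ = θ.be i := by
              simp only [hzt, inner_add_right, real_inner_smul_right, hdh1,
                θ.mem_Iact.mp hi]
              ring
            have hdζ : ⟪θ.d i, ζ⟫ ≤ 0 := by
              simp only [hζ, inner_sub_right, hdzt]
              have := hz' i
              linarith
            have : ⟪c (Sum.inl i), ζ⟫ ≤ 0 := by simpa [hc, hi] using hdζ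
            nlinarith [hlam0 (Sum.inl i)]
        · simp [hc, hi]
      · simp only [Sum.elim_inr]
        by_cases hi : i ∈ θ.Kact zb
        · by_cases hl : lam (Sum.inr i) = 0
          · simp [hl]
          · have hlpos : 0 < lam (Sum.inr i) :=
              lt_of_le_of_ne (hlam0 (Sum.inr i)) (Ne.symm hl)
            have hah1 : ⟪θ.a i - vb, h1⟫ = 0 := by
              have := hcomp (Sum.inr i)
              simp only [hc, Sum.elim_inr, if_pos hi] at this
              rcases mul_eq_zero.mp this with h | h
              · exact absurd h hl
              · exact h
            have hfzt : ⟪θ.a i, zt⟫ - θ.al i = θ.val zt := by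
              have hai : ⟪θ.a i, h1⟫ = ⟪vb, h1⟫ := by
                rw [inner_sub_left] at hah1; linarith
              simp only [hzt, inner_add_right, real_inner_smul_right, hai]
              have hvz : θ.val zb = ⟪θ.a i, zb⟫ - θ.al i := θ.mem_Kact.mp hi
              rw [hval_t]
              linarith
            have hcζ : ⟪c (Sum.inr i), ζ⟫ ≤ D - A := by
              have hfz' : ⟪θ.a i, z'⟫ - θ.al i ≤ θ.val z' := θ.le_val z' i
              simp only [hc, Sum.elim_inr, if_pos hi, inner_sub_left]
              simp only [hζ, inner_sub_right] at hA ⊢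
              simp only [hD]
              rw [← hfzt]
              simp only [hA]
              linarith
            exact mul_le_mul_of_nonneg_left hcζ (hlam0 (Sum.inr i))
        · have : lam (Sum.inr i) * ⟪c (Sum.inr i), ζ⟫ = 0 := by simp [hc, hi]
          rw [this]
          exact mul_nonneg (hlam0 (Sum.inr i)) (by linarith)
    have hsum2 : ⟪h2, ζ⟫ ≤ muh * (D - A) := by
      have e1 : ⟪h2, ζ⟫ = ∑ j, lam j * ⟪c j, ζ⟫ := by
        rw [hdecomp, sum_inner]
        exact Finset.sum_congr rfl (fun j _ => by rw [real_inner_smul_left])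
      rw [e1]
      calc ∑ j, lam j * ⟪c j, ζ⟫
          ≤ ∑ j, Sum.elim (fun _ : Fin θ.p => (0:ℝ)) (fun i => lam (Sum.inr i) * (D - A)) j :=
            Finset.sum_le_sum (fun j _ => hterm2 j)
        _ = muh * (D - A) := by
            rw [Fintype.sum_sum_type]
            simp only [Sum.elim_inl, Sum.elim_inr, Finset.sum_const_zero, zero_add]
            rw [hmuh, Finset.sum_mul]
    -- conclude
    have hgoal : ⟪vb + t • h2, ζ⟫ ≤ D := by
      rw [inner_add_left, real_inner_smul_left]
      have h3 : t * ⟪h2, ζ⟫ ≤ t * (muh * (D - A)) :=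
        mul_le_mul_of_nonneg_left hsum2 ht.le
      nlinarith [hAD, ht1, (show (0:ℝ) < t from ht).le, hmuh0]
    exact hgoal
  -- build the tangent-cone sequences
  obtain ⟨u, hu_anti, hu_pos, hu_tend⟩ := exists_seq_strictAnti_tendsto (0:ℝ)
  have hu_tendW : Filter.Tendsto u Filter.atTop (𝓝[>] (0:ℝ)) :=
    tendsto_nhdsWithin_of_tendsto_nhds_of_eventually_within u hu_tend
      (Filter.Eventually.of_forall hu_pos)
  have hev := hu_tendW.eventually hgmem
  obtain ⟨N, hN⟩ := Filter.eventually_atTop.mp hev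
  set w : ℕ → ℝ := fun k => u (N + k) with hw
  have hw_pos : ∀ k, 0 < w k := fun k => hu_pos (N + k)
  have hw_mem : ∀ k, (zb + w k • h1, vb + w k • h2) ∈ θ.gph :=
    fun k => hN (N + k) (Nat.le_add_right N k)
  have hw_tend : Filter.Tendsto w Filter.atTop (𝓝 0) :=
    hu_tend.comp (tendsto_atTop_mono (fun k => Nat.le_add_left k N)  tendsto_id)
  refine ⟨fun k => (zb + w k • h1, vb + w k • h2), fun k => (w k)⁻¹, hw_mem,
    fun k => inv_nonneg.mpr (hw_pos k).le, ?_, ?_⟩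
  · have hz1 : Filter.Tendsto (fun k => zb + w k • h1) Filter.atTop (𝓝 zb) := by
      have h2' := hw_tend.smul_const h1
      rw [zero_smul] at h2'
      simpa using ((tendsto_const_nhds :
        Filter.Tendsto (fun _ : ℕ => zb) Filter.atTop (𝓝 zb)).add h2')
    have hz2 : Filter.Tendsto (fun k => vb + w k • h2) Filter.atTop (𝓝 vb) := by
      have h2' := hw_tend.smul_const h2
      rw [zero_smul] at h2'
      simpa using ((tendsto_const_nhds :
        Filter.Tendsto (fun _ : ℕ => vb) Filter.atTop (𝓝 vb)).add h2')
    exact hz1.prodMk_nhds hz2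
  · have : (fun k => (w k)⁻¹ • ((zb + w k • h1, vb + w k • h2) - (zb, vb)))
        = fun _ => (h1, h2) := by
      funext k
      have hne : w k ≠ 0 := (hw_pos k).ne'
      apply Prod.ext
      · simp only [Prod.fst_sub, Prod.smul_fst]
        rw [add_sub_cancel_left, smul_smul, inv_mul_cancel₀ hne, one_smul]
      · simp only [Prod.snd_sub, Prod.smul_snd]
        rw [add_sub_cancel_left, smul_smul, inv_mul_cancel₀ hne, one_smul]
    rw [this]
    exact tendsto_const_nhds

/-- The tangent cone to the graph of the subdifferential is the graph of the
normal cone mapping of the critical cone. -/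
lemma tcone_gph_eq (θ : CPWL m) {zb vb : Ev m} (hsub : vb ∈ θ.subdiff zb) :
    tcone θ.gph (zb, vb) = Gset θ zb vb :=
  le_antisymm (tcone_gph_subset_Gset θ hsub) (Gset_subset_tcone θ hsub)

end TangentChar2

section Assembly

lemma zero_mem_Kcone {m : ℕ} (θ : CPWL m) (zb vb : Ev m) : (0 : Ev m) ∈ Kcone θ zb vb :=
  ⟨fun i _ => by simp, fun i _ => by simp⟩

theorem stmt5' {n m : ℕ} (θ : CPWL m) (f : Ev n → Ev n) (Φ : Ev n → Ev m)
    (xb : Ev n) (vb : Ev m)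
    (hvb : vb ∈ Lam f Φ θ xb) :
    IsCritical f Φ θ xb vb ↔
      ∃ (ξ : Ev n) (η : Ev m), ξ ≠ 0 ∧
        η ∈ θ.Dhat (Φ xb) vb (-(fderiv ℝ Φ xb ξ)) ∧
        gradxPsi f Φ xb vb ξ + adjD Φ xb η = 0 ∧
        ⟪η, fderiv ℝ Φ xb ξ⟫ = 0 := by
  have hsub : vb ∈ θ.subdiff (Φ xb) := hvb.2
  have hT := tcone_gph_eq θ hsub
  constructor
  · rintro ⟨ξ, hξ, w, hw, heq⟩
    have hG : (fderiv ℝ Φ xb ξ, w) ∈ Gset θ (Φ xb) vb := by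
      rw [← hT]; exact hw
    refine ⟨ξ, w, hξ, ?_, heq, ?_⟩
    · intro h hh
      rw [hT] at hh
      have l1 : ⟪w, h.1⟫ ≤ 0 := hG.2.1 h.1 hh.1
      have l2 : ⟪h.2, fderiv ℝ Φ xb ξ⟫ ≤ 0 := hh.2.1 _ hG.1
      rw [inner_neg_left]
      rw [real_inner_comm] at l2
      linarith
    · rw [real_inner_comm]; exact hG.2.2
  · rintro ⟨ξ, η, hξ, hDhat, heq, horth⟩
    refine ⟨ξ, hξ, η, ?_, heq⟩
    show (fderiv ℝ Φ xb ξ, η) ∈ tcone θ.gph (Φ xb, vb)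
    rw [hT]
    refine ⟨⟨?_, ?_⟩, ?_, ?_⟩
    · intro i hi
      have hmem : ((0 : Ev m), θ.d i) ∈ tcone θ.gph (Φ xb, vb) := by
        rw [hT]
        exact ⟨zero_mem_Kcone θ _ _, fun w hw => hw.1 i hi, by simp⟩
      have := hDhat _ hmem
      simp only [inner_zero_right, inner_neg_left] at this
      rw [real_inner_comm]
      linarith
    · intro i hi
      have hmem : ((0 : Ev m), θ.a i - vb) ∈ tcone θ.gph (Φ xb, vb) := by
        rw [hT]
        refine ⟨zero_mem_Kcone θ _ _, fun w hw => ?_, by simp⟩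
        have := hw.2 i hi
        rw [inner_sub_left]
        linarith
      have := hDhat _ hmem
      simp only [inner_zero_right, inner_neg_left, inner_sub_right] at this
      have c1 : ⟪fderiv ℝ Φ xb ξ, θ.a i⟫ = ⟪θ.a i, fderiv ℝ Φ xb ξ⟫ := real_inner_comm _ _
      have c2 : ⟪fderiv ℝ Φ xb ξ, vb⟫ = ⟪vb, fderiv ℝ Φ xb ξ⟫ := real_inner_comm _ _
      linarith
    · intro w hw
      have hmem : (w, (0 : Ev m)) ∈ tcone θ.gph (Φ xb, vb) := by
        rw [hT]
        exact ⟨hw, fun w' _ => by simp, by simp⟩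
      have := hDhat _ hmem
      simpa using this
    · rw [real_inner_comm]; exact horth

end Assembly

/-- coderivative description of critical multipliers. -/
theorem stmt5 {n m : ℕ} (θ : CPWL m) (f : Ev n → Ev n) (Φ : Ev n → Ev m)
    (xb : Ev n) (vb : Ev m)
    (hf : DifferentiableAt ℝ f xb) (hPhi : DifferentiableAt ℝ Φ xb)
    (hPhi2 : DifferentiableAt ℝ (fderiv ℝ Φ) xb)
    (hvb : vb ∈ Lam f Φ θ xb) :
    IsCritical f Φ θ xb vb ↔
      ∃ (ξ : Ev n) (η : Ev m), ξ ≠ 0 ∧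
        η ∈ θ.Dhat (Φ xb) vb (-(fderiv ℝ Φ xb ξ)) ∧
        gradxPsi f Φ xb vb ξ + adjD Φ xb η = 0 ∧
        ⟪η, fderiv ℝ Φ xb ξ⟫ = 0 :=
  stmt5' θ f Φ xb vb hvb
end
end

section
/- Let θ be a CPWL function and let x̄, v̄, Ψ, Λ(x̄) be as in the variational-system setting with v̄ ∈ Λ(x̄). If ⟨∇ₓΨ(x̄,v̄)u, u⟩ > 0 for every u ≠ 0 with ∇Φ(x̄)u ∈ 𝒦(z̄,v̄), then v̄ is a noncritical multiplier. -/
open Filter Topology Set RealInnerProductSpace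

noncomputable section

section KeyLemma

variable {m : ℕ}

/-- Key structural lemma: if `(u,w)` is tangent to the graph of `∂θ` at `(z̄,v̄)` with
`v̄ ∈ ∂θ(z̄)`, then `u` belongs to the critical cone and `⟪u,w⟫ ≥ 0`. -/
lemma cpwl_key (θ : CPWL m) (zb vb u w : Ev m)
    (hvb : vb ∈ θ.subdiff zb) (h : (u, w) ∈ tcone θ.gph (zb, vb)) :
    u ∈ θ.crit zb vb ∧ 0 ≤ ⟪u, w⟫ := by
  haveI : Nonempty (Fin θ.l) := ⟨⟨0, θ.hl⟩⟩
  have bdd : ∀ z : Ev m, BddAbove (Set.range fun i : Fin θ.l => ⟪θ.a i, z⟫ - θ.al i) :=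
    fun z => (Set.finite_range _).bddAbove
  have le_val : ∀ (i : Fin θ.l) (z : Ev m), ⟪θ.a i, z⟫ - θ.al i ≤ θ.val z :=
    fun i z => le_ciSup (bdd z) i
  have exists_act : ∀ z : Ev m, ∃ i, θ.val z = ⟪θ.a i, z⟫ - θ.al i := by
    intro z
    obtain ⟨i, hi⟩ := Finite.exists_max (fun i : Fin θ.l => ⟪θ.a i, z⟫ - θ.al i)
    exact ⟨i, le_antisymm (ciSup_le hi) (le_val i z)⟩
  obtain ⟨i0, hi0⟩ := exists_act zb
  have hi0K : i0 ∈ θ.Kact zb := hi0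
  haveI hKne : Nonempty ↥(θ.Kact zb) := ⟨⟨i0, hi0K⟩⟩
  set D : Ev m → ℝ := fun h => ⨆ i : ↥(θ.Kact zb), ⟪θ.a i.1, h⟫ with hDdef
  have bddK : ∀ h : Ev m, BddAbove (Set.range fun i : ↥(θ.Kact zb) => ⟪θ.a i.1, h⟫) :=
    fun h => (Set.finite_range _).bddAbove
  obtain ⟨jC, hjC⟩ := Finite.exists_max (fun i : Fin θ.l => ‖θ.a i‖)
  set C : ℝ := ‖θ.a jC‖ with hCdef
  have Dlip : ∀ h h' : Ev m, D h ≤ D h' + C * ‖h - h'‖ := by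
    intro h h'
    refine ciSup_le fun i => ?_
    have e1 : ⟪θ.a i.1, h⟫ = ⟪θ.a i.1, h'⟫ + ⟪θ.a i.1, h - h'⟫ := by
      rw [← inner_add_right]; congr 1; abel
    have e2 : ⟪θ.a i.1, h'⟫ ≤ D h' := le_ciSup (bddK h') i
    have e3 : ⟪θ.a i.1, h - h'⟫ ≤ ‖θ.a i.1‖ * ‖h - h'‖ := real_inner_le_norm _ _
    have e4 : ‖θ.a i.1‖ * ‖h - h'‖ ≤ C * ‖h - h'‖ :=
      mul_le_mul_of_nonneg_right (hjC i.1) (norm_nonneg _)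
    linarith
  have Dtend : ∀ (q : ℕ → Ev m) (u' : Ev m), Tendsto q atTop (𝓝 u') →
      Tendsto (fun k => D (q k)) atTop (𝓝 (D u')) := by
    intro q u' hq
    have habs : ∀ k, ‖D (q k) - D u'‖ ≤ C * ‖q k - u'‖ := by
      intro k
      rw [Real.norm_eq_abs, abs_sub_le_iff]
      constructor
      · have := Dlip (q k) u'; linarith
      · have := Dlip u' (q k); rw [norm_sub_rev] at this; linarith
    have hn : Tendsto (fun k => C * ‖q k - u'‖) atTop (𝓝 0) := by
      have := (tendsto_iff_norm_sub_tendsto_zero.mp hq).const_mul C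
      simpa using this
    have h0 : Tendsto (fun k => D (q k) - D u') atTop (𝓝 0) :=
      squeeze_zero_norm habs hn
    have := h0.add (tendsto_const_nhds (x := D u'))
    simpa using this
  have Dsmul : ∀ (c : ℝ), 0 ≤ c → ∀ h : Ev m, D (c • h) = c * D h := by
    intro c hc h
    have : (fun i : ↥(θ.Kact zb) => ⟪θ.a i.1, c • h⟫) =
        fun i : ↥(θ.Kact zb) => c * ⟪θ.a i.1, h⟫ := by
      funext i; exact real_inner_smul_right _ _ _
    rw [hDdef]
    simp only [this]
    exact (Real.mul_iSup_of_nonneg hc _).symm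
  -- unpack the tangent vector
  obtain ⟨s, c, hs_mem, hc, hs_lim, hq_lim⟩ := h
  set zk : ℕ → Ev m := fun k => (s k).1 with hzk
  set vk : ℕ → Ev m := fun k => (s k).2 with hvk
  have hzdom : ∀ k, zk k ∈ θ.dom := fun k => (hs_mem k).1
  have hsub : ∀ k, ∀ z' ∈ θ.dom, ⟪vk k, z' - zk k⟫ ≤ θ.val z' - θ.val (zk k) :=
    fun k => (hs_mem k).2
  have hzlim : Tendsto zk atTop (𝓝 zb) := (continuous_fst.tendsto _).comp hs_lim
  have hvlim : Tendsto vk atTop (𝓝 vb) := (continuous_snd.tendsto _).comp hs_lim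
  have hqu : Tendsto (fun k => c k • (zk k - zb)) atTop (𝓝 u) := by
    have := (continuous_fst.tendsto ((u, w) : Ev m × Ev m)).comp hq_lim
    simpa [Function.comp_def] using this
  have hqw : Tendsto (fun k => c k • (vk k - vb)) atTop (𝓝 w) := by
    have := (continuous_snd.tendsto ((u, w) : Ev m × Ev m)).comp hq_lim
    simpa [Function.comp_def] using this
  have hzbdom : zb ∈ θ.dom := hvb.1
  have hvbsub : ∀ z' ∈ θ.dom, ⟪vb, z' - zb⟫ ≤ θ.val z' - θ.val zb := hvb.2
  -- monotonicity along the graph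
  have mono : ∀ k, 0 ≤ ⟪zk k - zb, vk k - vb⟫ := by
    intro k
    have h1 := hsub k zb hzbdom
    have h2 := hvbsub (zk k) (hzdom k)
    have f1 : ⟪vk k, zb - zk k⟫ = -⟪vk k, zk k - zb⟫ := by
      rw [show zb - zk k = -(zk k - zb) by abel, inner_neg_right]
    have f2 : ⟪zk k - zb, vk k - vb⟫ = ⟪vk k, zk k - zb⟫ - ⟪vb, zk k - zb⟫ := by
      rw [real_inner_comm, inner_sub_left]
    rw [f1] at h1
    linarith
  have hb : 0 ≤ ⟪u, w⟫ := by
    have hpos : ∀ k, 0 ≤ ⟪c k • (zk k - zb), c k • (vk k - vb)⟫ := by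
      intro k
      rw [real_inner_smul_left, real_inner_smul_right, ← mul_assoc]
      exact mul_nonneg (mul_nonneg (hc k) (hc k)) (mono k)
    exact ge_of_tendsto' (hqu.inner hqw) hpos
  -- u is tangent to the domain
  have htc : u ∈ tcone θ.dom zb := ⟨zk, c, hzdom, hc, hzlim, hqu⟩
  -- D u ≤ ⟪vb, u⟫
  have hDle : D u ≤ ⟪vb, u⟫ := by
    refine ciSup_le fun i => ?_
    have hiK : θ.val zb = ⟪θ.a i.1, zb⟫ - θ.al i.1 := i.2
    have key : ∀ k, ⟪θ.a i.1, c k • (zk k - zb)⟫ ≤ ⟪vk k, c k • (zk k - zb)⟫ := by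
      intro k
      have h1 : ⟪θ.a i.1, zk k - zb⟫ ≤ θ.val (zk k) - θ.val zb := by
        have hv := le_val i.1 (zk k)
        have expand : ⟪θ.a i.1, zk k - zb⟫ =
            (⟪θ.a i.1, zk k⟫ - θ.al i.1) - (⟪θ.a i.1, zb⟫ - θ.al i.1) := by
          rw [inner_sub_right]; ring
        rw [expand, ← hiK]
        linarith
      have h2 : θ.val (zk k) - θ.val zb ≤ ⟪vk k, zk k - zb⟫ := by
        have h3 := hsub k zb hzbdom
        have f1 : ⟪vk k, zb - zk k⟫ = -⟪vk k, zk k - zb⟫ := by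
          rw [show zb - zk k = -(zk k - zb) by abel, inner_neg_right]
        rw [f1] at h3
        linarith
      rw [real_inner_smul_right, real_inner_smul_right]
      exact mul_le_mul_of_nonneg_left (h1.trans h2) (hc k)
    have t1 : Tendsto (fun k => ⟪θ.a i.1, c k • (zk k - zb)⟫) atTop (𝓝 ⟪θ.a i.1, u⟫) :=
      tendsto_const_nhds.inner hqu
    have t2 : Tendsto (fun k => ⟪vk k, c k • (zk k - zb)⟫) atTop (𝓝 ⟪vb, u⟫) :=
      hvlim.inner hqu
    exact le_of_tendsto_of_tendsto' t1 t2 key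
  -- ⟪vb, u⟫ ≤ D u
  have hh0 : Tendsto (fun k => zk k - zb) atTop (𝓝 0) := by
    simpa using hzlim.sub (tendsto_const_nhds (x := zb))
  have hvD : ⟪vb, u⟫ ≤ D u := by
    have hev : ∀ᶠ k in atTop, θ.val (zk k) ≤ θ.val zb + D (zk k - zb) := by
      have hall : ∀ᶠ k in atTop, ∀ i : Fin θ.l,
          ⟪θ.a i, zk k⟫ - θ.al i ≤ θ.val zb + D (zk k - zb) := by
        rw [eventually_all]
        intro i
        by_cases hiK : i ∈ θ.Kact zb
        · refine Eventually.of_forall fun k => ?_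
          have hiK' : θ.val zb = ⟪θ.a i, zb⟫ - θ.al i := hiK
          have expand : ⟪θ.a i, zk k⟫ - θ.al i = θ.val zb + ⟪θ.a i, zk k - zb⟫ := by
            rw [inner_sub_right, hiK']; ring
          have hle : ⟪θ.a i, zk k - zb⟫ ≤ D (zk k - zb) :=
            le_ciSup (bddK _) (⟨i, hiK⟩ : ↥(θ.Kact zb))
          rw [expand]; linarith
        · have hlt : ⟪θ.a i, zb⟫ - θ.al i < θ.val zb :=
            lt_of_le_of_ne (le_val i zb) (fun e => hiK e.symm)
          set ε : ℝ := θ.val zb - (⟪θ.a i, zb⟫ - θ.al i) with hεdef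
          have hεpos : 0 < ε := by simp only [hεdef]; linarith
          have hte : Tendsto (fun k => ⟪θ.a i, zk k - zb⟫ - ⟪θ.a i0, zk k - zb⟫)
              atTop (𝓝 0) := by
            have ha : Tendsto (fun k => ⟪θ.a i, zk k - zb⟫) atTop (𝓝 ⟪θ.a i, (0 : Ev m)⟫) :=
              tendsto_const_nhds.inner hh0
            have hb' : Tendsto (fun k => ⟪θ.a i0, zk k - zb⟫) atTop (𝓝 ⟪θ.a i0, (0 : Ev m)⟫) :=
              tendsto_const_nhds.inner hh0
            have := ha.sub hb'
            simpa using this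
          filter_upwards [hte.eventually (gt_mem_nhds hεpos)] with k hk
          have hD0 : ⟪θ.a i0, zk k - zb⟫ ≤ D (zk k - zb) :=
            le_ciSup (bddK _) (⟨i0, hi0K⟩ : ↥(θ.Kact zb))
          have expand : ⟪θ.a i, zk k⟫ - θ.al i =
              (⟪θ.a i, zb⟫ - θ.al i) + ⟪θ.a i, zk k - zb⟫ := by
            rw [inner_sub_right]; ring
          rw [expand]
          have : ⟪θ.a i, zb⟫ - θ.al i = θ.val zb - ε := by simp only [hεdef]; ring
          rw [this]
          linarith
      filter_upwards [hall] with k hk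
      exact ciSup_le hk
    have hevq : ∀ᶠ k in atTop,
        ⟪vb, c k • (zk k - zb)⟫ ≤ D (c k • (zk k - zb)) := by
      filter_upwards [hev] with k hk
      have h2 : ⟪vb, zk k - zb⟫ ≤ θ.val (zk k) - θ.val zb := hvbsub _ (hzdom k)
      rw [real_inner_smul_right, Dsmul (c k) (hc k)]
      exact mul_le_mul_of_nonneg_left (by linarith) (hc k)
    have t1 : Tendsto (fun k => ⟪vb, c k • (zk k - zb)⟫) atTop (𝓝 ⟪vb, u⟫) :=
      tendsto_const_nhds.inner hqu
    have t2 : Tendsto (fun k => D (c k • (zk k - zb))) atTop (𝓝 (D u)) :=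
      Dtend _ u hqu
    exact le_of_tendsto_of_tendsto t1 t2 hevq
  have hDu : D u = ⟪vb, u⟫ := le_antisymm hDle hvD
  -- directional derivative limit
  have hge : ∀ t : ℝ, θ.val zb + t * D u ≤ θ.val (zb + t • u) := by
    intro t
    obtain ⟨j, hj⟩ := Finite.exists_max (fun i : ↥(θ.Kact zb) => ⟪θ.a i.1, u⟫)
    have hDj : D u = ⟪θ.a j.1, u⟫ := le_antisymm (ciSup_le hj) (le_ciSup (bddK u) j)
    have hjK : θ.val zb = ⟪θ.a j.1, zb⟫ - θ.al j.1 := j.2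
    have hv := le_val j.1 (zb + t • u)
    have expand : ⟪θ.a j.1, zb + t • u⟫ - θ.al j.1 =
        (⟪θ.a j.1, zb⟫ - θ.al j.1) + t * ⟪θ.a j.1, u⟫ := by
      rw [inner_add_right, real_inner_smul_right]; ring
    rw [expand, ← hjK] at hv
    rw [hDj]
    linarith
  have hle : ∀ᶠ t in 𝓝[>] (0 : ℝ), θ.val (zb + t • u) ≤ θ.val zb + t * D u := by
    have hall : ∀ᶠ t in 𝓝[>] (0 : ℝ), ∀ i : Fin θ.l,
        ⟪θ.a i, zb + t • u⟫ - θ.al i ≤ θ.val zb + t * D u := by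
      rw [eventually_all]
      intro i
      by_cases hiK : i ∈ θ.Kact zb
      · filter_upwards [self_mem_nhdsWithin] with t ht
        have ht' : (0 : ℝ) < t := ht
        have hiK' : θ.val zb = ⟪θ.a i, zb⟫ - θ.al i := hiK
        have hle' : ⟪θ.a i, u⟫ ≤ D u := le_ciSup (bddK u) (⟨i, hiK⟩ : ↥(θ.Kact zb))
        have expand : ⟪θ.a i, zb + t • u⟫ - θ.al i =
            (⟪θ.a i, zb⟫ - θ.al i) + t * ⟪θ.a i, u⟫ := by
          rw [inner_add_right, real_inner_smul_right]; ring
        rw [expand, ← hiK']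
        nlinarith
      · have hlt : ⟪θ.a i, zb⟫ - θ.al i < θ.val zb :=
          lt_of_le_of_ne (le_val i zb) (fun e => hiK e.symm)
        set ε : ℝ := θ.val zb - (⟪θ.a i, zb⟫ - θ.al i) with hεdef
        have hεpos : 0 < ε := by simp only [hεdef]; linarith
        have hte : Tendsto (fun t : ℝ => t * (⟪θ.a i, u⟫ - D u)) (𝓝[>] 0) (𝓝 0) := by
          have h1 : Tendsto (fun t : ℝ => t * (⟪θ.a i, u⟫ - D u)) (𝓝 0) (𝓝 0) := by
            have hcont : Continuous (fun t : ℝ => t * (⟪θ.a i, u⟫ - D u)) :=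
              continuous_id.mul continuous_const
            have := hcont.tendsto (0 : ℝ)
            simpa using this
          exact h1.mono_left nhdsWithin_le_nhds
        filter_upwards [hte.eventually (gt_mem_nhds hεpos)] with t ht2
        have expand : ⟪θ.a i, zb + t • u⟫ - θ.al i =
            (⟪θ.a i, zb⟫ - θ.al i) + t * ⟪θ.a i, u⟫ := by
          rw [inner_add_right, real_inner_smul_right]; ring
        rw [expand]
        have h3 : ⟪θ.a i, zb⟫ - θ.al i = θ.val zb - ε := by simp only [hεdef]; ring
        rw [h3]
        nlinarith
    filter_upwards [hall] with t ht
    exact ciSup_le ht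
  have hquot : Tendsto (fun t : ℝ => (θ.val (zb + t • u) - θ.val zb) / t)
      (𝓝[>] (0 : ℝ)) (𝓝 ⟪vb, u⟫) := by
    have hevt : (fun _ : ℝ => D u) =ᶠ[𝓝[>] (0 : ℝ)]
        fun t : ℝ => (θ.val (zb + t • u) - θ.val zb) / t := by
      filter_upwards [hle, self_mem_nhdsWithin] with t h1 h2
      have ht' : (0 : ℝ) < t := h2
      have hge' := hge t
      have heq : θ.val (zb + t • u) - θ.val zb = t * D u := by linarith
      rw [heq, mul_div_cancel_left₀ _ (ne_of_gt ht')]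
    have hconst : Tendsto (fun _ : ℝ => D u) (𝓝[>] (0 : ℝ)) (𝓝 ⟪vb, u⟫) := by
      rw [← hDu]; exact tendsto_const_nhds
    exact Tendsto.congr' hevt hconst
  exact ⟨⟨htc, hquot⟩, hb⟩

end KeyLemma

/-- the second-order sufficient condition implies noncriticality of the
multiplier for the variational system. -/
theorem stmt9 {n m : ℕ} (θ : CPWL m) (f : Ev n → Ev n) (Φ : Ev n → Ev m)
    (xb : Ev n) (vb : Ev m)
    (hf : DifferentiableAt ℝ f xb) (hPhi : DifferentiableAt ℝ Φ xb)
    (hPhi2 : DifferentiableAt ℝ (fderiv ℝ Φ) xb)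
    (hvb : vb ∈ Lam f Φ θ xb)
    (sosc : ∀ u : Ev n, u ≠ 0 → fderiv ℝ Φ xb u ∈ θ.crit (Φ xb) vb →
      0 < ⟪gradxPsi f Φ xb vb u, u⟫) :
    ¬ IsCritical f Φ θ xb vb := by
  rintro ⟨ξ, hξ, w, hw, heq⟩
  obtain ⟨hcrit, hmono⟩ := cpwl_key θ (Φ xb) vb (fderiv ℝ Φ xb ξ) w hvb.2 hw
  have hpos := sosc ξ hξ hcrit
  have h1 : gradxPsi f Φ xb vb ξ = -(adjD Φ xb w) := by
    have := heq
    linear_combination (norm := abel) this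
  have h2 : ⟪gradxPsi f Φ xb vb ξ, ξ⟫ = -⟪w, fderiv ℝ Φ xb ξ⟫ := by
    rw [h1, inner_neg_left]
    congr 1
    exact ContinuousLinearMap.adjoint_inner_left _ _ _
  have h3 : 0 ≤ ⟪w, fderiv ℝ Φ xb ξ⟫ := by
    rw [real_inner_comm]; exact hmono
  rw [h2] at hpos
  linarith
end
end
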